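/- The rational function r(x) = ((864x-1)² + 6)/(12(864x-1)) is a solution of the Riccati equation with parameter λ = 49/144: for every real x with x ≠ 0, x ≠ 1/432 and x ≠ 1/864, one has r'(x) + r(x)²/((1-432x)x) - 60 = (49/144)·(1/((1-432x)x)). -/

import Mathlib

/-- The rational function `r(x) = ((864x-1)^2 + 6)/(12(864x-1))` solves the Riccati equation
`r'(x) + C_x r(x)^2 - 60 = λ C_x` with `C_x = 1/((1-432x)x)` and `λ = 49/144`, for every real
`x ≠ 0`, `x ≠ 1/432`, `x ≠ 1/864`. -/
theorem riccati_solution_lambda_49_over_144 :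
    ∀ x : ℝ, x ≠ 0 → x ≠ 1 / 432 → x ≠ 1 / 864 →
      deriv (fun y : ℝ => ((864 * y - 1) ^ 2 + 6) / (12 * (864 * y - 1))) x
        + (((864 * x - 1) ^ 2 + 6) / (12 * (864 * x - 1))) ^ 2 / ((1 - 432 * x) * x) - 60
      = (49 / 144) * (1 / ((1 - 432 * x) * x)) := by
  intro x hx0 hx432 hx864
  have hd : (864 * x - 1) ≠ 0 := by
    intro h
    apply hx864
    field_simp
    linarith
  have hD : (12 : ℝ) * (864 * x - 1) ≠ 0 := mul_ne_zero (by norm_num) hd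
  have hc : (1 - 432 * x) ≠ 0 := by
    intro h
    apply hx432
    field_simp
    linarith
  have hN : HasDerivAt (fun y : ℝ => (864 * y - 1) ^ 2 + 6)
      (2 * (864 * x - 1) ^ 1 * 864) x := by
    have h1 : HasDerivAt (fun y : ℝ => 864 * y - 1) 864 x :=
      by simpa using ((hasDerivAt_id x).const_mul 864).sub_const 1
    exact (h1.pow 2).add_const 6
  have hDd : HasDerivAt (fun y : ℝ => 12 * (864 * y - 1)) (12 * 864) x :=
    by simpa using (((hasDerivAt_id x).const_mul 864).sub_const 1).const_mul 12
  have h : deriv (fun y : ℝ => ((864 * y - 1) ^ 2 + 6) / (12 * (864 * y - 1))) x = _ :=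
    (hN.div hDd hD).deriv
  rw [h]
  have hc' : 1 - x * 432 ≠ 0 := by rwa [mul_comm]
  field_simp
  ring
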